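/- arXiv:1104.0983 — 4 statements merged into one kernel-verified Lean document; each statement's English description precedes it below -/
import Mathlib

section
/- Duhamel's formula: for n×n complex matrices A and B, e^{A+B} = e^A + ∫₀¹ e^{tA} B e^{(1-t)(A+B)} dt. -/
open Matrix MeasureTheory

attribute [local instance] Matrix.linftyOpNormedRing Matrix.linftyOpNormedAlgebra

theorem duhamel_formula {n : ℕ} (A B : Matrix (Fin n) (Fin n) ℂ) :
    NormedSpace.exp (A + B) = NormedSpace.exp A +
      ∫ t in (0:ℝ)..1,
        NormedSpace.exp (t • A) * B * NormedSpace.exp ((1 - t) • (A + B)) := by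
  set M := A + B with hM
  have hexp : (NormedSpace.exp : Matrix (Fin n) (Fin n) ℂ → _) = NormedSpace.exp :=
    rfl
  set f : ℝ → Matrix (Fin n) (Fin n) ℂ :=
    fun t => NormedSpace.exp (t • A) * NormedSpace.exp ((1 - t) • M) with hf
  have key : ∀ t : ℝ,
      HasDerivAt f (-(NormedSpace.exp (t • A) * B * NormedSpace.exp ((1 - t) • M))) t := by
    intro t
    have h1 : HasDerivAt (fun u : ℝ => NormedSpace.exp (u • A))
        (NormedSpace.exp (t • A) * A) t := by
      rw [hexp]
      exact hasDerivAt_exp_smul_const A t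
    have h2' : HasDerivAt (fun u : ℝ => NormedSpace.exp (u • M))
        (M * NormedSpace.exp ((1 - t) • M)) (1 - t) := by
      rw [hexp]
      exact hasDerivAt_exp_smul_const' M (1 - t)
    have hsub : HasDerivAt (fun u : ℝ => 1 - u) (-1) t := by
      simpa using (hasDerivAt_id t).const_sub 1
    have h2 : HasDerivAt (fun u : ℝ => NormedSpace.exp ((1 - u) • M))
        ((-1 : ℝ) • (M * NormedSpace.exp ((1 - t) • M))) t := h2'.scomp t hsub
    have := h1.mul h2
    convert this using 1
    case e'_4 => rfl
    case e'_5 => rfl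
    case e'_6 => rfl
    case e'_8 => rfl
    rw [neg_one_smul]
    have : A - M = -B := by rw [hM]; abel
    calc -(NormedSpace.exp (t • A) * B * NormedSpace.exp ((1 - t) • M))
        = NormedSpace.exp (t • A) * (A - M) * NormedSpace.exp ((1 - t) • M) := by
          rw [this]; noncomm_ring
      _ = _ := by noncomm_ring
  have hcont : Continuous fun t : ℝ =>
      -(NormedSpace.exp (t • A) * B * NormedSpace.exp ((1 - t) • M)) := by
    apply Continuous.neg
    apply Continuous.mul
    · exact (NormedSpace.exp_continuous.comp (continuous_id.smul continuous_const)).mul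
        continuous_const
    · exact NormedSpace.exp_continuous.comp ((continuous_const.sub continuous_id).smul
        continuous_const)
  have hint := intervalIntegral.integral_eq_sub_of_hasDerivAt (a := (0:ℝ)) (b := 1)
    (fun t _ => key t) (hcont.intervalIntegrable 0 1)
  rw [intervalIntegral.integral_neg] at hint
  have hf1 : f 1 = NormedSpace.exp A := by
    simp [hf, NormedSpace.exp_zero]
  have hf0 : f 0 = NormedSpace.exp M := by
    simp [hf, NormedSpace.exp_zero]
  rw [hf1, hf0] at hint
  have := neg_eq_iff_eq_neg.mp hint
  rw [this]
  abel
end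

section
/- Iterated Duhamel expansion: for n×n complex matrices A and B, e^{A+B} = ∑_{k≥0} ∫_{0<t₁<⋯<t_k<1} e^{t₁A} B e^{(t₂-t₁)A} B ⋯ B e^{(1-t_k)A} dt₁⋯dt_k, where the series converges absolutely in operator norm. -/
open Matrix MeasureTheory

attribute [local instance] Matrix.linftyOpNormedRing Matrix.linftyOpNormedAlgebra

/-- `duhamelChain A B k t s` is the product
`e^{(t₁-s)A} B e^{(t₂-t₁)A} B ⋯ B e^{(1-t_k)A}` where `t₁, …, t_k` are `t 0, …, t (k-1)`. -/
noncomputable def duhamelChain {n : ℕ} (A B : Matrix (Fin n) (Fin n) ℂ) :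
    ℕ → (ℕ → ℝ) → ℝ → Matrix (Fin n) (Fin n) ℂ
  | 0, _, s => NormedSpace.exp ((1 - s) • A)
  | (k+1), t, s =>
      NormedSpace.exp ((t 0 - s) • A) * B *
        duhamelChain A B k (fun i => t (i + 1)) (t 0)

/-- The open simplex `{0 < t₁ < t₂ < ⋯ < t_k < 1}`. -/
def duhamelSimplex (k : ℕ) : Set (Fin k → ℝ) :=
  {t | (∀ i, 0 < t i ∧ t i < 1) ∧ StrictMono t}

/-- The integrand of the `k`-th Duhamel term, as a function of `t : Fin k → ℝ`. -/
noncomputable def duhamelIntegrand {n : ℕ} (A B : Matrix (Fin n) (Fin n) ℂ) (k : ℕ)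
    (t : Fin k → ℝ) : Matrix (Fin n) (Fin n) ℂ :=
  duhamelChain A B k (fun i => if h : i < k then t ⟨i, h⟩ else 0) 0

section DuhamelAux
open NormedSpace Set

variable {k : ℕ} {s : ℝ}

/-- simplex with lower bound `s` -/
def dT (k : ℕ) (s : ℝ) : Set (Fin k → ℝ) :=
  {t | (∀ i, s < t i ∧ t i < 1) ∧ StrictMono t}

lemma mem_dT_succ {t : Fin (k+1) → ℝ} :
    t ∈ dT (k+1) s ↔ t 0 ∈ Set.Ioo s 1 ∧ Fin.tail t ∈ dT k (t 0) := by
  constructor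
  · rintro ⟨h1, h2⟩
    refine ⟨⟨(h1 0).1, (h1 0).2⟩, ⟨fun i => ⟨h2 (Fin.succ_pos i), (h1 i.succ).2⟩, ?_⟩⟩
    exact fun i j hij => h2 (Fin.succ_lt_succ_iff.mpr hij)
  · rintro ⟨h0, h1, h2⟩
    refine ⟨?_, ?_⟩
    · intro i
      refine Fin.cases ⟨h0.1, h0.2⟩ (fun j => ⟨lt_trans h0.1 (h1 j).1, (h1 j).2⟩) i
    · intro i j hij
      refine Fin.cases (fun hj => ?_) (fun i' hj => ?_) i hij
      · obtain ⟨j', rfl⟩ := Fin.eq_succ_of_ne_zero (Fin.pos_iff_ne_zero.mp hj)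
        exact (h1 j').1
      · obtain ⟨j', rfl⟩ := Fin.eq_succ_of_ne_zero (Fin.pos_iff_ne_zero.mp
          (lt_trans (Fin.succ_pos i') hj))
        exact h2 (Fin.succ_lt_succ_iff.mp hj)

lemma isOpen_dT2 : IsOpen {q : ℝ × (Fin k → ℝ) | q.2 ∈ dT k q.1} := by
  have : {q : ℝ × (Fin k → ℝ) | q.2 ∈ dT k q.1} =
      (⋂ i, ({q : ℝ × (Fin k → ℝ) | q.1 < q.2 i} ∩ {q | q.2 i < 1})) ∩
        ⋂ i, ⋂ j, {q : ℝ × (Fin k → ℝ) | i < j → q.2 i < q.2 j} := by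
    ext q
    simp only [Set.mem_setOf_eq, Set.mem_inter_iff, Set.mem_iInter, dT, StrictMono]
  rw [this]
  refine IsOpen.inter (isOpen_iInter_of_finite fun i => IsOpen.inter ?_ ?_)
    (isOpen_iInter_of_finite fun i => isOpen_iInter_of_finite fun j => ?_)
  · exact isOpen_lt continuous_fst ((continuous_apply i).comp continuous_snd)
  · exact isOpen_lt ((continuous_apply i).comp continuous_snd) continuous_const
  · by_cases hij : i < j
    · simp only [hij, true_implies]
      exact isOpen_lt ((continuous_apply i).comp continuous_snd)
        ((continuous_apply j).comp continuous_snd)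
    · simp only [hij, false_implies, Set.setOf_true]
      exact isOpen_univ

lemma isOpen_dT : IsOpen (dT k s) := by
  have : dT k s = (fun y : Fin k → ℝ => ((s : ℝ), y)) ⁻¹' {q : ℝ × (Fin k → ℝ) | q.2 ∈ dT k q.1} :=
    rfl
  rw [this]
  exact isOpen_dT2.preimage (by fun_prop)

lemma dT_subset_Icc : dT k s ⊆ Set.Icc (fun _ => s) (fun _ => 1) := by
  rintro t ⟨h1, -⟩
  exact ⟨fun i => (h1 i).1.le, fun i => (h1 i).2.le⟩

lemma integrableOn_dT {E : Type*} [NormedAddCommGroup E] {f : (Fin k → ℝ) → E}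
    (hf : Continuous f) : IntegrableOn f (dT k s) := by
  refine (hf.continuousOn.integrableOn_compact isCompact_Icc).mono_set dT_subset_Icc


lemma measurableSet_dT : MeasurableSet (dT k s) := isOpen_dT.measurableSet

lemma dPeel {E : Type*} [NormedAddCommGroup E] [NormedSpace ℝ E] [CompleteSpace E]
    (F : ℝ → (Fin k → ℝ) → E)
    (hF : Continuous fun p : ℝ × (Fin k → ℝ) => F p.1 p.2) :
    ((∫ t in dT (k+1) s, F (t 0) (Fin.tail t)) = ∫ u in Set.Ioo s 1, ∫ y in dT k u, F u y) ∧
      IntegrableOn (fun u => ∫ y in dT k u, F u y) (Set.Ioo s 1) := by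
  classical
  set W : Set (ℝ × (Fin k → ℝ)) := {q | q.1 ∈ Set.Ioo s 1 ∧ q.2 ∈ dT k q.1} with hW
  have hWopen : IsOpen W := by
    have : W = ((Set.Ioo s 1) ×ˢ (Set.univ : Set (Fin k → ℝ))) ∩
        {q : ℝ × (Fin k → ℝ) | q.2 ∈ dT k q.1} := by
      ext q; simp [hW, Set.mem_prod]
    rw [this]
    exact ((isOpen_Ioo).prod isOpen_univ).inter isOpen_dT2
  have hWmeas : MeasurableSet W := hWopen.measurableSet
  -- boundedness
  have hWsub : W ⊆ Set.Icc ((s, fun _ => s) : ℝ × (Fin k → ℝ)) (1, fun _ => 1) := by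
    rintro ⟨u, y⟩ ⟨hu, hy⟩
    refine ⟨⟨hu.1.le, fun i => (lt_trans hu.1 (hy.1 i).1).le⟩,
      ⟨hu.2.le, fun i => (hy.1 i).2.le⟩⟩
  set f : ℝ × (Fin k → ℝ) → E := fun q => F q.1 q.2 with hf
  have hIW : IntegrableOn f W ((volume : Measure ℝ).prod volume) := by
    refine ((hF.continuousOn.integrableOn_compact isCompact_Icc).mono_set hWsub)
  set H : ℝ × (Fin k → ℝ) → E := W.indicator f with hH
  have hHint : Integrable H ((volume : Measure ℝ).prod volume) :=
    hIW.integrable_indicator hWmeas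
  -- transfer from pi to prod
  have mp := measurePreserving_piFinSuccAbove (fun _ : Fin (k+1) => (volume : Measure ℝ)) 0
  set e := MeasurableEquiv.piFinSuccAbove (fun _ : Fin (k+1) => ℝ) 0 with he
  have he' : ∀ t : Fin (k+1) → ℝ, e t = (t 0, Fin.tail t) := by
    intro t
    rfl
  have hind : ∀ t : Fin (k+1) → ℝ,
      (dT (k+1) s).indicator (fun t : Fin (k+1) → ℝ => F (t 0) (Fin.tail t)) t = H (e t) := by
    intro t
    rw [he']
    by_cases ht : t ∈ dT (k+1) s
    · rw [Set.indicator_of_mem ht, hH, Set.indicator_of_mem]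
      exact ⟨(mem_dT_succ.mp ht).1, (mem_dT_succ.mp ht).2⟩
    · rw [Set.indicator_of_notMem ht, hH, Set.indicator_of_notMem]
      intro hmem
      exact ht (mem_dT_succ.mpr ⟨hmem.1, hmem.2⟩)
  have step1 : (∫ t in dT (k+1) s, F (t 0) (Fin.tail t)) = ∫ p, H p ∂((volume : Measure ℝ).prod volume) := by
    rw [← integral_indicator measurableSet_dT]
    rw [show ((dT (k+1) s).indicator fun t : Fin (k+1) → ℝ => F (t 0) (Fin.tail t)) =
      fun t => H (e t) from funext hind]
    exact mp.integral_comp e.measurableEmbedding H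
  have hinner : ∀ u : ℝ, (∫ y, H (u, y)) =
      (Set.Ioo s 1).indicator (fun u => ∫ y in dT k u, F u y) u := by
    intro u
    by_cases hu : u ∈ Set.Ioo s 1
    · rw [Set.indicator_of_mem hu]
      have : (fun y => H (u, y)) = (dT k u).indicator (F u) := by
        funext y
        by_cases hy : y ∈ dT k u
        · rw [hH, Set.indicator_of_mem (show (u, y) ∈ W by exact ⟨hu, hy⟩), Set.indicator_of_mem hy]
        · rw [hH, Set.indicator_of_notMem, Set.indicator_of_notMem hy]
          exact fun hmem => hy hmem.2
      rw [this, integral_indicator measurableSet_dT]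
    · rw [Set.indicator_of_notMem hu]
      have : (fun y => H (u, y)) = fun _ => 0 := by
        funext y
        exact Set.indicator_of_notMem (fun hmem => hu hmem.1) _
      rw [this, integral_zero]
  have step2 : (∫ p, H p ∂((volume : Measure ℝ).prod volume)) =
      ∫ u in Set.Ioo s 1, ∫ y in dT k u, F u y := by
    rw [integral_prod H hHint]
    rw [show (fun u => ∫ y, H (u, y)) =
      (Set.Ioo s 1).indicator (fun u => ∫ y in dT k u, F u y) from funext hinner]
    exact integral_indicator measurableSet_Ioo
  refine ⟨step1.trans step2, ?_⟩
  have := hHint.integral_prod_left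
  rw [show (fun u => ∫ y, H (u, y)) =
    (Set.Ioo s 1).indicator (fun u => ∫ y in dT k u, F u y) from funext hinner] at this
  exact (integrable_indicator_iff measurableSet_Ioo).mp this


section Matrices
variable {n : ℕ}

local notation "𝕄" => Matrix (Fin n) (Fin n) ℂ

attribute [local instance] Matrix.linftyOpNormedRing Matrix.linftyOpNormedAlgebra

noncomputable instance matCENorm : ContinuousENorm 𝕄 :=
  { toENorm := inferInstance,
    continuous_enorm := (SeminormedAddGroup.toContinuousENorm (E := 𝕄)).continuous_enorm }

variable (A B : Matrix (Fin n) (Fin n) ℂ)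

/-- Fin-indexed version of the chain. -/
noncomputable def cI (k : ℕ) (t : Fin k → ℝ) (s : ℝ) : Matrix (Fin n) (Fin n) ℂ :=
  duhamelChain A B k (fun i => if h : i < k then t ⟨i, h⟩ else 0) s

/-- chain with `exp ((1-t_k) • (A+B))` at the end. -/
noncomputable def cR : (k : ℕ) → (Fin k → ℝ) → ℝ → Matrix (Fin n) (Fin n) ℂ
  | 0, _, s => exp ((1 - s) • (A + B))
  | (k+1), t, s => exp ((t 0 - s) • A) * B * cR k (Fin.tail t) (t 0)

lemma cI_zero (t : Fin 0 → ℝ) (s : ℝ) : cI A B 0 t s = exp ((1 - s) • A) := rfl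

lemma cI_succ (k : ℕ) (t : Fin (k+1) → ℝ) (s : ℝ) :
    cI A B (k+1) t s = exp ((t 0 - s) • A) * B * cI A B k (Fin.tail t) (t 0) := by
  have h1 : (fun i => if h : i + 1 < k + 1 then t ⟨i + 1, h⟩ else 0) =
      (fun i => if h : i < k then Fin.tail t ⟨i, h⟩ else 0) := by
    funext i
    by_cases h : i < k
    · rw [dif_pos (Nat.add_lt_add_right h 1), dif_pos h]
      rfl
    · rw [dif_neg (by omega), dif_neg h]
  simp only [cI, duhamelChain]
  rw [dif_pos (Nat.succ_pos k), h1]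
  rfl

lemma mnorm_one_le : ‖(1 : 𝕄)‖ ≤ 1 := by
  rw [← Matrix.diagonal_one, Matrix.linfty_opNorm_diagonal]
  refine pi_norm_le_iff_of_nonneg zero_le_one |>.mpr fun i => ?_
  simp

lemma mnorm_pow_le (M : 𝕄) : ∀ j : ℕ, ‖M ^ j‖ ≤ ‖M‖ ^ j
  | 0 => by rw [pow_zero, pow_zero]; exact mnorm_one_le
  | (j+1) => by
    rw [pow_succ, pow_succ]
    exact le_trans (norm_mul_le _ _)
      (mul_le_mul_of_nonneg_right (mnorm_pow_le M j) (norm_nonneg _))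

lemma mnorm_exp_le (M : 𝕄) : ‖exp M‖ ≤ Real.exp ‖M‖ := by
  rw [exp_eq_tsum ℂ]
  have hs : HasSum (fun j : ℕ => ‖M‖ ^ j / (Nat.factorial j)) (Real.exp ‖M‖) := by
    have := (Real.summable_pow_div_factorial ‖M‖).hasSum
    rwa [show (∑' j : ℕ, ‖M‖ ^ j / (Nat.factorial j) : ℝ) = Real.exp ‖M‖ by
      rw [Real.exp_eq_exp_ℝ, exp_eq_tsum_div]] at this
  refine tsum_of_norm_bounded hs fun j => ?_
  rw [norm_smul, div_eq_inv_mul]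
  have h1 : ‖((Nat.factorial j : ℂ))⁻¹‖ = ((Nat.factorial j : ℝ))⁻¹ := by
    rw [norm_inv]
    norm_num
  rw [h1]
  exact mul_le_mul_of_nonneg_left (mnorm_pow_le M j) (by positivity)


lemma cI_cont (k : ℕ) : Continuous fun p : (Fin k → ℝ) × ℝ => cI A B k p.1 p.2 := by
  induction k with
  | zero =>
    show Continuous fun p : (Fin 0 → ℝ) × ℝ => exp ((1 - p.2) • A)
    exact exp_continuous.comp ((continuous_const.sub continuous_snd).smul continuous_const)
  | succ k ih =>
    have : (fun p : (Fin (k+1) → ℝ) × ℝ => cI A B (k+1) p.1 p.2) =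
        fun p => exp ((p.1 0 - p.2) • A) * B * cI A B k (Fin.tail p.1) (p.1 0) :=
      funext fun p => cI_succ A B k p.1 p.2
    rw [this]
    have hg : Continuous fun p : (Fin (k+1) → ℝ) × ℝ => ((Fin.tail p.1 : Fin k → ℝ), p.1 0) := by
      refine Continuous.prodMk ?_ ((continuous_apply 0).comp continuous_fst)
      exact continuous_pi fun i => (continuous_apply i.succ).comp continuous_fst
    refine Continuous.mul (Continuous.mul ?_ continuous_const) ?_
    · exact exp_continuous.comp
        ((((continuous_apply 0).comp continuous_fst).sub continuous_snd).smul continuous_const)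
    · simpa [Function.comp_def] using ih.comp hg

lemma cR_cont (k : ℕ) : Continuous fun p : (Fin k → ℝ) × ℝ => cR A B k p.1 p.2 := by
  induction k with
  | zero =>
    show Continuous fun p : (Fin 0 → ℝ) × ℝ => exp ((1 - p.2) • (A + B))
    exact exp_continuous.comp ((continuous_const.sub continuous_snd).smul continuous_const)
  | succ k ih =>
    show Continuous fun p : (Fin (k+1) → ℝ) × ℝ =>
      exp ((p.1 0 - p.2) • A) * B * cR A B k (Fin.tail p.1) (p.1 0)
    have hg : Continuous fun p : (Fin (k+1) → ℝ) × ℝ => ((Fin.tail p.1 : Fin k → ℝ), p.1 0) := by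
      refine Continuous.prodMk ?_ ((continuous_apply 0).comp continuous_fst)
      exact continuous_pi fun i => (continuous_apply i.succ).comp continuous_fst
    refine Continuous.mul (Continuous.mul ?_ continuous_const) ?_
    · exact exp_continuous.comp
        ((((continuous_apply 0).comp continuous_fst).sub continuous_snd).smul continuous_const)
    · simpa [Function.comp_def] using ih.comp hg

lemma cI_bound : ∀ (k : ℕ) (t : Fin k → ℝ) (s : ℝ), s ≤ 1 → t ∈ dT k s →
    ‖cI A B k t s‖ ≤ Real.exp ((1 - s) * (‖A‖ + ‖B‖)) * ‖B‖ ^ k := by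
  intro k
  induction k with
  | zero =>
    intro t s hs _
    rw [cI_zero, pow_zero, mul_one]
    refine (mnorm_exp_le _).trans (Real.exp_le_exp.mpr ?_)
    rw [norm_smul, Real.norm_eq_abs, abs_of_nonneg (by linarith)]
    have := norm_nonneg B
    nlinarith [norm_nonneg A]
  | succ k ih =>
    intro t s hs ht
    obtain ⟨h0, htail⟩ := mem_dT_succ.mp ht
    rw [cI_succ]
    have hb1 : ‖exp ((t 0 - s) • A)‖ ≤ Real.exp ((t 0 - s) * ‖A‖) := by
      refine (mnorm_exp_le _).trans (Real.exp_le_exp.mpr ?_)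
      rw [norm_smul, Real.norm_eq_abs, abs_of_nonneg (by linarith [h0.1])]
    have hb2 := ih (Fin.tail t) (t 0) h0.2.le htail
    calc ‖exp ((t 0 - s) • A) * B * cI A B k (Fin.tail t) (t 0)‖
        ≤ ‖exp ((t 0 - s) • A)‖ * ‖B‖ * ‖cI A B k (Fin.tail t) (t 0)‖ :=
          le_trans (norm_mul_le _ _) (mul_le_mul_of_nonneg_right (norm_mul_le _ _) (norm_nonneg _))
      _ ≤ Real.exp ((t 0 - s) * ‖A‖) * ‖B‖ *
            (Real.exp ((1 - t 0) * (‖A‖ + ‖B‖)) * ‖B‖ ^ k) := by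
          have hBnn := norm_nonneg B
          have hcnn := norm_nonneg (cI A B k (Fin.tail t) (t 0))
          have := Real.exp_nonneg ((t 0 - s) * ‖A‖)
          gcongr
      _ ≤ Real.exp ((1 - s) * (‖A‖ + ‖B‖)) * ‖B‖ ^ (k + 1) := by
          rw [pow_succ]
          have hexp : Real.exp ((t 0 - s) * ‖A‖) * Real.exp ((1 - t 0) * (‖A‖ + ‖B‖)) ≤
              Real.exp ((1 - s) * (‖A‖ + ‖B‖)) := by
            rw [← Real.exp_add]
            refine Real.exp_le_exp.mpr ?_
            nlinarith [norm_nonneg A, norm_nonneg B, h0.1, h0.2, sub_nonneg.mpr hs]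
          calc Real.exp ((t 0 - s) * ‖A‖) * ‖B‖ *
                (Real.exp ((1 - t 0) * (‖A‖ + ‖B‖)) * ‖B‖ ^ k)
              = (Real.exp ((t 0 - s) * ‖A‖) * Real.exp ((1 - t 0) * (‖A‖ + ‖B‖))) *
                  (‖B‖ ^ k * ‖B‖) := by ring
            _ ≤ Real.exp ((1 - s) * (‖A‖ + ‖B‖)) * (‖B‖ ^ k * ‖B‖) := by
                have : (0:ℝ) ≤ ‖B‖ ^ k * ‖B‖ := by positivity
                exact mul_le_mul_of_nonneg_right hexp this

lemma cR_bound : ∀ (k : ℕ) (t : Fin k → ℝ) (s : ℝ), s ≤ 1 → t ∈ dT k s →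
    ‖cR A B k t s‖ ≤ Real.exp ((1 - s) * (‖A‖ + ‖B‖)) * ‖B‖ ^ k := by
  intro k
  induction k with
  | zero =>
    intro t s hs _
    show ‖exp ((1 - s) • (A + B))‖ ≤ _
    rw [pow_zero, mul_one]
    refine (mnorm_exp_le _).trans (Real.exp_le_exp.mpr ?_)
    rw [norm_smul, Real.norm_eq_abs, abs_of_nonneg (by linarith)]
    have := norm_add_le A B
    nlinarith [norm_nonneg A, norm_nonneg B, norm_nonneg (A + B)]
  | succ k ih =>
    intro t s hs ht
    obtain ⟨h0, htail⟩ := mem_dT_succ.mp ht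
    show ‖exp ((t 0 - s) • A) * B * cR A B k (Fin.tail t) (t 0)‖ ≤ _
    have hb1 : ‖exp ((t 0 - s) • A)‖ ≤ Real.exp ((t 0 - s) * ‖A‖) := by
      refine (mnorm_exp_le _).trans (Real.exp_le_exp.mpr ?_)
      rw [norm_smul, Real.norm_eq_abs, abs_of_nonneg (by linarith [h0.1])]
    have hb2 := ih (Fin.tail t) (t 0) h0.2.le htail
    calc ‖exp ((t 0 - s) • A) * B * cR A B k (Fin.tail t) (t 0)‖
        ≤ ‖exp ((t 0 - s) • A)‖ * ‖B‖ * ‖cR A B k (Fin.tail t) (t 0)‖ :=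
          le_trans (norm_mul_le _ _) (mul_le_mul_of_nonneg_right (norm_mul_le _ _) (norm_nonneg _))
      _ ≤ Real.exp ((t 0 - s) * ‖A‖) * ‖B‖ *
            (Real.exp ((1 - t 0) * (‖A‖ + ‖B‖)) * ‖B‖ ^ k) := by
          have hBnn := norm_nonneg B
          have hcnn := norm_nonneg (cR A B k (Fin.tail t) (t 0))
          have := Real.exp_nonneg ((t 0 - s) * ‖A‖)
          gcongr
      _ ≤ Real.exp ((1 - s) * (‖A‖ + ‖B‖)) * ‖B‖ ^ (k + 1) := by
          rw [pow_succ]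
          have hexp : Real.exp ((t 0 - s) * ‖A‖) * Real.exp ((1 - t 0) * (‖A‖ + ‖B‖)) ≤
              Real.exp ((1 - s) * (‖A‖ + ‖B‖)) := by
            rw [← Real.exp_add]
            refine Real.exp_le_exp.mpr ?_
            nlinarith [norm_nonneg A, norm_nonneg B, h0.1, h0.2, sub_nonneg.mpr hs]
          calc Real.exp ((t 0 - s) * ‖A‖) * ‖B‖ *
                (Real.exp ((1 - t 0) * (‖A‖ + ‖B‖)) * ‖B‖ ^ k)
              = (Real.exp ((t 0 - s) * ‖A‖) * Real.exp ((1 - t 0) * (‖A‖ + ‖B‖))) *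
                  (‖B‖ ^ k * ‖B‖) := by ring
            _ ≤ Real.exp ((1 - s) * (‖A‖ + ‖B‖)) * (‖B‖ ^ k * ‖B‖) := by
                have : (0:ℝ) ≤ ‖B‖ ^ k * ‖B‖ := by positivity
                exact mul_le_mul_of_nonneg_right hexp this


lemma duhamel_one {s : ℝ} (hs : s ≤ 1) :
    exp ((1 - s) • (A + B)) = exp ((1 - s) • A) +
      ∫ u in Set.Ioo s 1, exp ((u - s) • A) * B * exp ((1 - u) • (A + B)) := by
  set M := A + B with hM
  set φ : ℝ → Matrix (Fin n) (Fin n) ℂ :=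
    fun u => exp ((u - s) • A) * exp ((1 - u) • M) with hφ
  set ψ : ℝ → Matrix (Fin n) (Fin n) ℂ :=
    fun u => exp ((u - s) • A) * B * exp ((1 - u) • M) with hψ
  have hd : ∀ u : ℝ, HasDerivAt φ (-ψ u) u := by
    intro u
    have d1 : HasDerivAt (fun u : ℝ => exp ((u - s) • A)) (A * exp ((u - s) • A)) u := by
      have h := hasDerivAt_exp_smul_const' (𝕂 := ℝ) A (u - s)
      have h3 : HasDerivAt (fun x : ℝ => x - s) 1 u := by
        simpa using (hasDerivAt_id u).sub_const s
      have h2 := h.scomp u h3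
      simp [Function.comp_def] at h2
      exact h2
    have d2 : HasDerivAt (fun u : ℝ => exp ((1 - u) • M)) (-(M * exp ((1 - u) • M))) u := by
      have h := hasDerivAt_exp_smul_const' (𝕂 := ℝ) M (1 - u)
      have h3 : HasDerivAt (fun u : ℝ => (1 : ℝ) - u) (-1) u := by
        simpa using (hasDerivAt_id u).const_sub (1:ℝ)
      have h2 := h.scomp u h3
      simp [Function.comp_def] at h2
      exact h2
    have := d1.mul d2
    convert this using 1
    · rfl
    · rfl
    · rfl
    · rfl
    have hc : A * exp ((u - s) • A) = exp ((u - s) • A) * A :=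
      (((Commute.refl A).smul_right (u - s)).exp_right).eq
    rw [hψ, hM, hc]
    noncomm_ring
  have hcψ : Continuous ψ := by
    refine Continuous.mul (Continuous.mul ?_ continuous_const) ?_
    · exact exp_continuous.comp (((continuous_id.sub continuous_const)).smul continuous_const)
    · exact exp_continuous.comp (((continuous_const.sub continuous_id)).smul continuous_const)
  have hftc := intervalIntegral.integral_eq_sub_of_hasDerivAt
    (fun u _ => hd u) (hcψ.neg.intervalIntegrable s 1)
  have hφ1 : φ 1 = exp ((1 - s) • A) := by
    simp [hφ, sub_self]
  have hφs : φ s = exp ((1 - s) • M) := by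
    simp [hφ, sub_self]
  rw [hφ1, hφs, intervalIntegral.integral_neg] at hftc
  have hint : (∫ u in s..1, ψ u) = ∫ u in Set.Ioo s 1, ψ u := by
    rw [intervalIntegral.integral_of_le hs, MeasureTheory.integral_Ioc_eq_integral_Ioo]
  rw [hint] at hftc
  have : exp ((1 - s) • M) = exp ((1 - s) • A) - (exp ((1 - s) • A) - exp ((1 - s) • M)) := by
    abel
  rw [this, ← neg_neg (exp ((1 - s) • A) - exp ((1 - s) • M)), ← hftc]
  abel


lemma dT_zero_eq_univ {s : ℝ} : dT 0 s = Set.univ :=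
  Set.eq_univ_of_forall fun t => ⟨fun i => i.elim0, fun a _ _ => a.elim0⟩

lemma integral_dT_zero {E : Type*} [NormedAddCommGroup E] [NormedSpace ℝ E] [CompleteSpace E]
    (c : E) {s : ℝ} : (∫ _ in dT 0 s, c) = c := by
  rw [dT_zero_eq_univ, setIntegral_univ, integral_const]
  have h1 : (volume : Measure (Fin 0 → ℝ)) Set.univ = 1 := by
    rw [MeasureTheory.volume_pi, Measure.pi_univ]
    simp
  rw [measureReal_def, h1]
  simp

lemma integral_Ioo_one_sub_pow (k : ℕ) {s : ℝ} (hs : s ≤ 1) :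
    (∫ u in Set.Ioo s 1, (1 - u) ^ k) = (1 - s) ^ (k + 1) / (k + 1) := by
  have hd : ∀ u : ℝ, HasDerivAt (fun u : ℝ => -((1 - u) ^ (k + 1)) / (k + 1)) ((1 - u) ^ k) u := by
    intro u
    have h1 : HasDerivAt (fun u : ℝ => (1 : ℝ) - u) (-1) u := by
      simpa using (hasDerivAt_id u).const_sub (1:ℝ)
    have h2 : HasDerivAt (fun u : ℝ => (1 - u) ^ (k + 1))
        (((k + 1 : ℕ) : ℝ) * (1 - u) ^ k * (-1)) u := by
      exact (hasDerivAt_pow (k + 1) (1 - u)).comp u h1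
    have h3 := (h2.div_const ((k : ℝ) + 1)).neg
    have hk : ((k : ℝ) + 1) ≠ 0 := by positivity
    convert h3 using 1
    · rfl
    · rfl
    · funext x
      simp only [Pi.neg_apply]
      ring
    · push_cast
      field_simp
  have hcont : Continuous fun u : ℝ => (1 - u) ^ k := by fun_prop
  have hftc := intervalIntegral.integral_eq_sub_of_hasDerivAt
    (fun u _ => hd u) (hcont.intervalIntegrable s 1)
  rw [intervalIntegral.integral_of_le hs, MeasureTheory.integral_Ioc_eq_integral_Ioo] at hftc
  rw [hftc]
  ring


lemma dT_volume : ∀ (k : ℕ) {s : ℝ}, s ≤ 1 →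
    (∫ _ in dT k s, (1:ℝ)) = (1 - s) ^ k / (Nat.factorial k) := by
  intro k
  induction k with
  | zero =>
    intro s _
    rw [integral_dT_zero]
    simp
  | succ k ih =>
    intro s hs
    have hpeel := dPeel (k := k) (s := s) (fun _ _ => (1:ℝ)) continuous_const
    have h1 : (∫ t in dT (k+1) s, (1:ℝ)) = ∫ u in Set.Ioo s 1, ∫ _ in dT k u, (1:ℝ) :=
      hpeel.1
    rw [h1]
    have h2 : (∫ u in Set.Ioo s 1, ∫ _ in dT k u, (1:ℝ)) =
        ∫ u in Set.Ioo s 1, (1 - u) ^ k / (Nat.factorial k) := by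
      refine setIntegral_congr_fun measurableSet_Ioo fun u hu => ?_
      exact ih hu.2.le
    rw [h2]
    have h3 : (∫ u in Set.Ioo s 1, (1 - u) ^ k / (Nat.factorial k)) =
        (∫ u in Set.Ioo s 1, (1 - u) ^ k) / (Nat.factorial k) := by
      rw [integral_div]
    rw [h3, integral_Ioo_one_sub_pow k hs, Nat.factorial_succ]
    have hk : ((k : ℝ) + 1) ≠ 0 := by positivity
    have hf : ((Nat.factorial k : ℝ)) ≠ 0 := by
      exact_mod_cast Nat.factorial_ne_zero k
    push_cast
    field_simp


lemma cR_zero (t : Fin 0 → ℝ) (s : ℝ) : cR A B 0 t s = exp ((1 - s) • (A + B)) := rfl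

lemma cR_succ (k : ℕ) (t : Fin (k+1) → ℝ) (s : ℝ) :
    cR A B (k+1) t s = exp ((t 0 - s) • A) * B * cR A B k (Fin.tail t) (t 0) := rfl

lemma cI_intOn (k : ℕ) (u : ℝ) : IntegrableOn (fun t => cI A B k t u) (dT k u) := by
  refine integrableOn_dT ?_
  have := (cI_cont A B k).comp
    ((continuous_id.prodMk (continuous_const : Continuous fun _ : Fin k → ℝ => u)))
  simp [Function.comp_def] at this
  exact this

lemma cR_intOn (k : ℕ) (u : ℝ) : IntegrableOn (fun t => cR A B k t u) (dT k u) := by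
  refine integrableOn_dT ?_
  have := (cR_cont A B k).comp
    ((continuous_id.prodMk (continuous_const : Continuous fun _ : Fin k → ℝ => u)))
  simp [Function.comp_def] at this
  exact this

lemma setIntegral_const_mul' (C : Matrix (Fin n) (Fin n) ℂ) {k : ℕ} {u : ℝ}
    (f : (Fin k → ℝ) → Matrix (Fin n) (Fin n) ℂ) (hf : IntegrableOn f (dT k u)) :
    (∫ y in dT k u, C * f y) = C * ∫ y in dT k u, f y := by
  have := (ContinuousLinearMap.mul ℝ (Matrix (Fin n) (Fin n) ℂ) C).integral_comp_comm hf
  simpa using this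

lemma cRs_cont (k : ℕ) (s : ℝ) : Continuous fun p : ℝ × (Fin k → ℝ) =>
    exp ((p.1 - s) • A) * B * cR A B k p.2 p.1 := by
  refine Continuous.mul (Continuous.mul ?_ continuous_const) ?_
  · exact exp_continuous.comp ((continuous_fst.sub continuous_const).smul continuous_const)
  · have := (cR_cont A B k).comp
      ((continuous_snd.prodMk continuous_fst) : Continuous fun p : ℝ × (Fin k → ℝ) => (p.2, p.1))
    simpa [Function.comp_def] using this

lemma cIs_cont (k : ℕ) (s : ℝ) : Continuous fun p : ℝ × (Fin k → ℝ) =>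
    exp ((p.1 - s) • A) * B * cI A B k p.2 p.1 := by
  refine Continuous.mul (Continuous.mul ?_ continuous_const) ?_
  · exact exp_continuous.comp ((continuous_fst.sub continuous_const).smul continuous_const)
  · have := (cI_cont A B k).comp
      ((continuous_snd.prodMk continuous_fst) : Continuous fun p : ℝ × (Fin k → ℝ) => (p.2, p.1))
    simpa [Function.comp_def] using this


lemma dKey : ∀ (k : ℕ) {s : ℝ}, s ≤ 1 →
    (∫ t in dT k s, cR A B k t s) =
      (∫ t in dT k s, cI A B k t s) + ∫ t in dT (k+1) s, cR A B (k+1) t s := by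
  intro k
  induction k with
  | zero =>
    intro s hs
    have e0R : (∫ t in dT 0 s, cR A B 0 t s) = exp ((1 - s) • (A + B)) := by
      rw [show (fun t : Fin 0 → ℝ => cR A B 0 t s) =
        fun _ => exp ((1 - s) • (A + B)) from rfl]
      exact integral_dT_zero _
    have e0I : (∫ t in dT 0 s, cI A B 0 t s) = exp ((1 - s) • A) := by
      rw [show (fun t : Fin 0 → ℝ => cI A B 0 t s) = fun _ => exp ((1 - s) • A) from rfl]
      exact integral_dT_zero _
    have hpeel := (dPeel (k := 0) (s := s)
      (fun u y => exp ((u - s) • A) * B * cR A B 0 y u) (cRs_cont A B 0 s)).1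
    have e1R : (∫ t in dT 1 s, cR A B 1 t s) =
        ∫ u in Set.Ioo s 1, exp ((u - s) • A) * B * exp ((1 - u) • (A + B)) := by
      rw [show (fun t : Fin 1 → ℝ => cR A B 1 t s) =
        fun t : Fin 1 → ℝ => exp ((t 0 - s) • A) * B * cR A B 0 (Fin.tail t) (t 0) from rfl]
      rw [hpeel]
      refine setIntegral_congr_fun measurableSet_Ioo fun u _ => ?_
      rw [show (fun y : Fin 0 → ℝ => exp ((u - s) • A) * B * cR A B 0 y u) =
        fun _ : Fin 0 → ℝ => exp ((u - s) • A) * B * exp ((1 - u) • (A + B)) from rfl]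
      exact integral_dT_zero _
    rw [e0R, e0I, e1R]
    exact duhamel_one A B hs
  | succ k ih =>
    intro s hs
    have peelR1 := dPeel (k := k) (s := s)
      (fun u y => exp ((u - s) • A) * B * cR A B k y u) (cRs_cont A B k s)
    have peelI1 := dPeel (k := k) (s := s)
      (fun u y => exp ((u - s) • A) * B * cI A B k y u) (cIs_cont A B k s)
    have peelR2 := dPeel (k := k + 1) (s := s)
      (fun u y => exp ((u - s) • A) * B * cR A B (k+1) y u) (cRs_cont A B (k+1) s)
    -- pull out constants in the inner integrals
    have pullR : ∀ u : ℝ, (∫ y in dT k u, exp ((u - s) • A) * B * cR A B k y u) =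
        exp ((u - s) • A) * B * ∫ y in dT k u, cR A B k y u := fun u =>
      setIntegral_const_mul' (exp ((u - s) • A) * B) _ (cR_intOn A B k u)
    have pullI : ∀ u : ℝ, (∫ y in dT k u, exp ((u - s) • A) * B * cI A B k y u) =
        exp ((u - s) • A) * B * ∫ y in dT k u, cI A B k y u := fun u =>
      setIntegral_const_mul' (exp ((u - s) • A) * B) _ (cI_intOn A B k u)
    have pullR2 : ∀ u : ℝ, (∫ y in dT (k+1) u, exp ((u - s) • A) * B * cR A B (k+1) y u) =
        exp ((u - s) • A) * B * ∫ y in dT (k+1) u, cR A B (k+1) y u := fun u =>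
      setIntegral_const_mul' (exp ((u - s) • A) * B) _ (cR_intOn A B (k+1) u)
    -- integrabilities of the marginals
    have intI : IntegrableOn
        (fun u => exp ((u - s) • A) * B * ∫ y in dT k u, cI A B k y u) (Set.Ioo s 1) := by
      have h := peelI1.2
      rwa [show (fun u => ∫ y in dT k u, exp ((u - s) • A) * B * cI A B k y u) =
        fun u => exp ((u - s) • A) * B * ∫ y in dT k u, cI A B k y u from funext pullI] at h
    have intR2 : IntegrableOn
        (fun u => exp ((u - s) • A) * B * ∫ y in dT (k+1) u, cR A B (k+1) y u)
        (Set.Ioo s 1) := by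
      have h := peelR2.2
      rwa [show (fun u => ∫ y in dT (k+1) u, exp ((u - s) • A) * B * cR A B (k+1) y u) =
        fun u => exp ((u - s) • A) * B * ∫ y in dT (k+1) u, cR A B (k+1) y u
        from funext pullR2] at h
    -- main computation
    calc (∫ t in dT (k+1) s, cR A B (k+1) t s)
        = ∫ u in Set.Ioo s 1, ∫ y in dT k u, exp ((u - s) • A) * B * cR A B k y u :=
          peelR1.1
      _ = ∫ u in Set.Ioo s 1, (exp ((u - s) • A) * B * (∫ y in dT k u, cI A B k y u) +
            exp ((u - s) • A) * B * ∫ y in dT (k+1) u, cR A B (k+1) y u) := by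
          refine setIntegral_congr_fun measurableSet_Ioo fun u hu => ?_
          rw [pullR u, ih hu.2.le, mul_add]
      _ = (∫ u in Set.Ioo s 1, exp ((u - s) • A) * B * ∫ y in dT k u, cI A B k y u) +
            ∫ u in Set.Ioo s 1, exp ((u - s) • A) * B *
              ∫ y in dT (k+1) u, cR A B (k+1) y u := integral_add intI intR2
      _ = (∫ t in dT (k+1) s, cI A B (k+1) t s) + ∫ t in dT (k+2) s, cR A B (k+2) t s := by
          congr 1
          · rw [show (fun t : Fin (k+1) → ℝ => cI A B (k+1) t s) =
              fun t => exp ((t 0 - s) • A) * B * cI A B k (Fin.tail t) (t 0)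
              from funext fun t => cI_succ A B k t s]
            rw [peelI1.1]
            exact setIntegral_congr_fun measurableSet_Ioo fun u _ => (pullI u).symm
          · rw [show (fun t : Fin (k+2) → ℝ => cR A B (k+2) t s) =
              fun t => exp ((t 0 - s) • A) * B * cR A B (k+1) (Fin.tail t) (t 0) from rfl]
            rw [peelR2.1]
            exact setIntegral_congr_fun measurableSet_Ioo fun u _ => (pullR2 u).symm


lemma dT_vol_toReal (k : ℕ) : (volume (dT k (0:ℝ))).toReal = 1 / (Nat.factorial k) := by
  have h := dT_volume k (by norm_num : (0:ℝ) ≤ 1)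
  rw [setIntegral_const, smul_eq_mul, mul_one, measureReal_def] at h
  rw [h]
  norm_num

lemma dT_vol_lt_top (k : ℕ) {s : ℝ} : volume (dT k s) < ⊤ :=
  lt_of_le_of_lt (measure_mono dT_subset_Icc) isCompact_Icc.measure_lt_top

lemma normInt_bound (k : ℕ) :
    (∫ t in dT k (0:ℝ), ‖cI A B k t 0‖) ≤
      Real.exp (‖A‖ + ‖B‖) * (‖B‖ ^ k / (Nat.factorial k)) := by
  have hc : ((1:ℝ) - 0) * (‖A‖ + ‖B‖) = ‖A‖ + ‖B‖ := by ring
  have h1 : (∫ t in dT k (0:ℝ), ‖cI A B k t 0‖) ≤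
      ∫ _ in dT k (0:ℝ), Real.exp (‖A‖ + ‖B‖) * ‖B‖ ^ k := by
    refine setIntegral_mono_on (cI_intOn A B k 0).norm
      (integrableOn_const (dT_vol_lt_top k).ne) measurableSet_dT fun t ht => ?_
    have := cI_bound A B k t 0 (by norm_num) ht
    rwa [hc] at this
  refine h1.trans ?_
  rw [setIntegral_const, smul_eq_mul, measureReal_def, dT_vol_toReal k]
  exact le_of_eq (by ring)

lemma normIntR_bound (k : ℕ) :
    (∫ t in dT k (0:ℝ), ‖cR A B k t 0‖) ≤
      Real.exp (‖A‖ + ‖B‖) * (‖B‖ ^ k / (Nat.factorial k)) := by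
  have hc : ((1:ℝ) - 0) * (‖A‖ + ‖B‖) = ‖A‖ + ‖B‖ := by ring
  have h1 : (∫ t in dT k (0:ℝ), ‖cR A B k t 0‖) ≤
      ∫ _ in dT k (0:ℝ), Real.exp (‖A‖ + ‖B‖) * ‖B‖ ^ k := by
    refine setIntegral_mono_on (cR_intOn A B k 0).norm
      (integrableOn_const (dT_vol_lt_top k).ne) measurableSet_dT fun t ht => ?_
    have := cR_bound A B k t 0 (by norm_num) ht
    rwa [hc] at this
  refine h1.trans ?_
  rw [setIntegral_const, smul_eq_mul, measureReal_def, dT_vol_toReal k]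
  exact le_of_eq (by ring)

lemma htele : ∀ N : ℕ, exp (A + B) =
    (∑ k ∈ Finset.range N, ∫ t in dT k (0:ℝ), cI A B k t 0) +
      ∫ t in dT N (0:ℝ), cR A B N t 0 := by
  intro N
  induction N with
  | zero =>
    rw [Finset.sum_range_zero, zero_add]
    rw [show (fun t : Fin 0 → ℝ => cR A B 0 t 0) =
      fun _ => exp ((1 - (0:ℝ)) • (A + B)) from rfl]
    rw [integral_dT_zero]
    norm_num
  | succ N ih =>
    rw [Finset.sum_range_succ, ih, dKey A B N (by norm_num : (0:ℝ) ≤ 1), add_assoc]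

lemma hsummable_bound : Summable fun k : ℕ =>
    Real.exp (‖A‖ + ‖B‖) * (‖B‖ ^ k / (Nat.factorial k)) :=
  (Real.summable_pow_div_factorial ‖B‖).mul_left _

lemma hGIsummable : Summable fun k : ℕ => ∫ t in dT k (0:ℝ), cI A B k t 0 := by
  refine Summable.of_norm_bounded (hsummable_bound A B) fun k => ?_
  exact (norm_integral_le_integral_norm _).trans (normInt_bound A B k)

theorem duhamel_main :
    (Summable fun k : ℕ => ∫ t in dT k (0:ℝ), ‖cI A B k t 0‖) ∧
    exp (A + B) = ∑' k : ℕ, ∫ t in dT k (0:ℝ), cI A B k t 0 := by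
  constructor
  · refine Summable.of_nonneg_of_le (fun k => ?_) (fun k => normInt_bound A B k)
      (hsummable_bound A B)
    exact integral_nonneg fun t => norm_nonneg _
  · have hGR : Filter.Tendsto (fun N => ∫ t in dT N (0:ℝ), cR A B N t 0) Filter.atTop (nhds 0) := by
      refine squeeze_zero_norm
        (a := fun N => Real.exp (‖A‖ + ‖B‖) * (‖B‖ ^ N / (Nat.factorial N)))
        (fun N => (norm_integral_le_integral_norm _).trans (normIntR_bound A B N)) ?_
      have h0 : Filter.Tendsto (fun N : ℕ => ‖B‖ ^ N / (Nat.factorial N : ℝ))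
          Filter.atTop (nhds 0) := (Real.summable_pow_div_factorial ‖B‖).tendsto_atTop_zero
      have := h0.const_mul (Real.exp (‖A‖ + ‖B‖))
      simpa using this
    have h1 : Filter.Tendsto (fun N => ∑ k ∈ Finset.range N, ∫ t in dT k (0:ℝ), cI A B k t 0)
        Filter.atTop (nhds (∑' k : ℕ, ∫ t in dT k (0:ℝ), cI A B k t 0)) :=
      (hGIsummable A B).hasSum.tendsto_sum_nat
    have h2 : Filter.Tendsto (fun N => ∑ k ∈ Finset.range N, ∫ t in dT k (0:ℝ), cI A B k t 0)
        Filter.atTop (nhds (exp (A + B))) := by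
      have heq : (fun N => ∑ k ∈ Finset.range N, ∫ t in dT k (0:ℝ), cI A B k t 0) =
          fun N => exp (A + B) - ∫ t in dT N (0:ℝ), cR A B N t 0 := by
        funext N
        rw [htele A B N]
        abel
      rw [heq]
      simpa using (tendsto_const_nhds.sub hGR :)
    exact tendsto_nhds_unique h2 h1

end Matrices

end DuhamelAux

theorem duhamel_expansion {n : ℕ} (A B : Matrix (Fin n) (Fin n) ℂ) :
    Summable (fun k : ℕ => ∫ t in duhamelSimplex k, ‖duhamelIntegrand A B k t‖) ∧
    NormedSpace.exp (A + B) =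
      ∑' k : ℕ, ∫ t in duhamelSimplex k, duhamelIntegrand A B k t := by
  exact ⟨(duhamel_main A B).1, (duhamel_main A B).2⟩
end

section
/- For self-adjoint n×n matrices A and B with B positive semidefinite, Tr e^{A+B} ≥ Tr e^{A}. -/
open Matrix
open scoped ComplexOrder

attribute [local instance] Matrix.linftyOpNormedRing Matrix.linftyOpNormedAlgebra

namespace TraceExpAux
variable {n : ℕ}

noncomputable def traceCLM (n : ℕ) : Matrix (Fin n) (Fin n) ℂ →L[ℂ] ℂ :=
  LinearMap.toContinuousLinearMap (Matrix.traceLinearMap (Fin n) ℂ ℂ)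

@[simp] lemma traceCLM_apply (X : Matrix (Fin n) (Fin n) ℂ) : traceCLM n X = X.trace := rfl

@[simp] lemma traceCLM_restrict_apply (X : Matrix (Fin n) (Fin n) ℂ) :
    ((traceCLM n).restrictScalars ℝ) X = X.trace := rfl

lemma nnnorm_entry_le (X : Matrix (Fin n) (Fin n) ℂ) (i j : Fin n) : ‖X i j‖₊ ≤ ‖X‖₊ := by
  rw [Matrix.linfty_opNNNorm_def]
  calc ‖X i j‖₊ ≤ ∑ j' : Fin n, ‖X i j'‖₊ :=
        Finset.single_le_sum (f := fun j' => ‖X i j'‖₊) (fun _ _ => zero_le) (Finset.mem_univ j)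
    _ ≤ _ := Finset.le_sup (f := fun i => ∑ j' : Fin n, ‖X i j'‖₊) (Finset.mem_univ i)

lemma norm_trace_le (X : Matrix (Fin n) (Fin n) ℂ) : ‖X.trace‖ ≤ n * ‖X‖ := by
  have h : ‖X.trace‖₊ ≤ n * ‖X‖₊ := by
    calc ‖X.trace‖₊ ≤ ∑ i : Fin n, ‖X i i‖₊ := nnnorm_sum_le _ _
      _ ≤ ∑ _i : Fin n, ‖X‖₊ := Finset.sum_le_sum fun i _ => nnnorm_entry_le X i i
      _ = n * ‖X‖₊ := by simp [Finset.sum_const, nsmul_eq_mul]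
  exact_mod_cast h

lemma norm_pow_mul_le (M B : Matrix (Fin n) (Fin n) ℂ) (k : ℕ) :
    ‖M ^ k * B‖ ≤ ‖M‖ ^ k * ‖B‖ := by
  induction k with
  | zero => simp
  | succ k ih =>
      have h : M ^ (k + 1) * B = M * (M ^ k * B) := by rw [pow_succ', mul_assoc]
      rw [h]
      calc ‖M * (M ^ k * B)‖ ≤ ‖M‖ * ‖M ^ k * B‖ := norm_mul_le _ _
        _ ≤ ‖M‖ * (‖M‖ ^ k * ‖B‖) :=
            mul_le_mul_of_nonneg_left ih (norm_nonneg _)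
        _ = ‖M‖ ^ (k + 1) * ‖B‖ := by ring

open scoped MatrixOrder in
lemma posSemidef_eq_conjTranspose_mul_self {P : Matrix (Fin n) (Fin n) ℂ}
    (hP : P.PosSemidef) : ∃ C : Matrix (Fin n) (Fin n) ℂ, P = Cᴴ * C := by
  classical
  obtain ⟨X, hX, -, hXP⟩ :=
    CFC.exists_sqrt_of_isSelfAdjoint_of_quasispectrumRestricts hP.isHermitian
      (QuasispectrumRestricts.nnreal_of_nonneg hP.nonneg)
  refine ⟨X, ?_⟩
  rw [← hXP, ← Matrix.star_eq_conjTranspose, hX.star_eq]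

lemma trace_mul_re_nonneg {P Q : Matrix (Fin n) (Fin n) ℂ}
    (hP : P.PosSemidef) (hQ : Q.PosSemidef) : 0 ≤ (Matrix.trace (P * Q)).re := by
  obtain ⟨C, hC⟩ := posSemidef_eq_conjTranspose_mul_self hP
  obtain ⟨D, hD⟩ := posSemidef_eq_conjTranspose_mul_self hQ
  have key : Matrix.trace (P * Q) = Matrix.trace ((C * Dᴴ)ᴴ * (C * Dᴴ)) := by
    rw [hC, hD, Matrix.conjTranspose_mul, Matrix.conjTranspose_conjTranspose]
    rw [show Cᴴ * C * (Dᴴ * D) = Cᴴ * (C * Dᴴ) * D by noncomm_ring,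
      Matrix.trace_mul_cycle]
  rw [key]
  set E := C * Dᴴ
  have h : (Matrix.trace (Eᴴ * E)).re = ∑ i, ∑ k, Complex.normSq (E k i) := by
    simp [Matrix.trace, Matrix.diag, Matrix.mul_apply, Matrix.conjTranspose_apply,
      Complex.re_sum, Complex.normSq_apply, Complex.normSq_eq_conj_mul_self]
  rw [h]
  exact Finset.sum_nonneg fun i _ => Finset.sum_nonneg fun k _ => Complex.normSq_nonneg _

lemma isHermitian_real_smul {H : Matrix (Fin n) (Fin n) ℂ} (hH : H.IsHermitian) (c : ℝ) :
    (c • H).IsHermitian := by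
  rw [Matrix.IsHermitian, Matrix.conjTranspose_smul, star_trivial, hH.eq]

lemma posSemidef_exp {H : Matrix (Fin n) (Fin n) ℂ} (hH : H.IsHermitian) :
    (NormedSpace.exp H).PosSemidef := by
  have h2 : ((1:ℝ)/2) • H + ((1:ℝ)/2) • H = H := by module
  have hherm : (((1:ℝ)/2) • H).IsHermitian := isHermitian_real_smul hH _
  have hcomm : Commute (((1:ℝ)/2) • H) (((1:ℝ)/2) • H) := Commute.refl _
  have hmm := Matrix.exp_add_of_commute _ _ hcomm
  rw [h2] at hmm
  rw [hmm]
  have hexpherm : (NormedSpace.exp (((1:ℝ)/2) • H)).IsHermitian :=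
    Matrix.IsHermitian.exp hherm
  nth_rewrite 1 [← hexpherm.eq]
  exact Matrix.posSemidef_conjTranspose_mul_self _

lemma hasDerivAt_M (A B : Matrix (Fin n) (Fin n) ℂ) (t : ℝ) :
    HasDerivAt (fun s : ℝ => A + s • B) B t := by
  have h := ((hasDerivAt_id t).smul_const B).const_add A
  rw [one_smul] at h
  exact h

lemma hasDerivAt_matpow (A B : Matrix (Fin n) (Fin n) ℂ) (k : ℕ) (t : ℝ) :
    HasDerivAt (fun s : ℝ => (A + s • B) ^ k)
      (∑ i ∈ Finset.range k,
        (A + t • B) ^ i * B * (A + t • B) ^ (k - 1 - i)) t := by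
  induction k with
  | zero =>
    simp only [pow_zero, Finset.range_zero, Finset.sum_empty]
    exact hasDerivAt_const t (1 : Matrix (Fin n) (Fin n) ℂ)
  | succ k ih =>
      have h := ih.mul (hasDerivAt_M A B t)
      have heq : (fun s : ℝ => (A + s • B) ^ k * (A + s • B))
          = fun s : ℝ => (A + s • B) ^ (k + 1) := by
        funext s; rw [← pow_succ]
      rw [show ((fun s : ℝ => (A + s • B) ^ k) * fun s : ℝ => A + s • B)
          = fun s : ℝ => (A + s • B) ^ k * (A + s • B) from rfl, heq] at h
      refine h.congr_deriv ?_
      symm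
      rw [Finset.sum_range_succ, Finset.sum_mul]
      congr 1
      · refine Finset.sum_congr rfl fun i hi => ?_
        rw [Finset.mem_range] at hi
        have h1 : k + 1 - 1 - i = (k - 1 - i) + 1 := by omega
        rw [h1, pow_succ]
        noncomm_ring
      · simp

lemma hasDerivAt_trace_pow (A B : Matrix (Fin n) (Fin n) ℂ) (k : ℕ) (t : ℝ) :
    HasDerivAt (fun s : ℝ => Matrix.trace ((A + s • B) ^ k))
      ((k : ℂ) * Matrix.trace ((A + t • B) ^ (k - 1) * B)) t := by
  have h := (((traceCLM n).restrictScalars ℝ).hasFDerivAt.comp_hasDerivAt t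
    (hasDerivAt_matpow A B k t))
  have hval : ((traceCLM n).restrictScalars ℝ)
      (∑ i ∈ Finset.range k, (A + t • B) ^ i * B * (A + t • B) ^ (k - 1 - i))
      = (k : ℂ) * Matrix.trace ((A + t • B) ^ (k - 1) * B) := by
    rw [map_sum]
    have hterm : ∀ i ∈ Finset.range k,
        ((traceCLM n).restrictScalars ℝ) ((A + t • B) ^ i * B * (A + t • B) ^ (k - 1 - i))
          = Matrix.trace ((A + t • B) ^ (k - 1) * B) := by
      intro i hi
      rw [Finset.mem_range] at hi
      rw [traceCLM_restrict_apply, Matrix.trace_mul_cycle, ← pow_add]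
      have h2 : k - 1 - i + i = k - 1 := by omega
      rw [h2]
    rw [Finset.sum_congr rfl hterm, Finset.sum_const, Finset.card_range, nsmul_eq_mul]
  exact hval ▸ h

/-! ### series assembly -/

lemma trace_exp_eq_tsum (X : Matrix (Fin n) (Fin n) ℂ) :
    Matrix.trace (NormedSpace.exp X)
      = ∑' k : ℕ, ((k.factorial : ℂ))⁻¹ * Matrix.trace (X ^ k) := by
  rw [NormedSpace.exp_eq_tsum ℂ]
  beta_reduce
  rw [← traceCLM_apply (n := n)]
  erw [ContinuousLinearMap.map_tsum _
    (NormedSpace.expSeries_summable' (𝕂 := ℂ) X)]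
  congr 1
  funext k
  exact Matrix.trace_smul ((k.factorial : ℂ))⁻¹ (X ^ k)

lemma trace_exp_mul_eq_tsum (X B : Matrix (Fin n) (Fin n) ℂ) :
    Matrix.trace (NormedSpace.exp X * B)
      = ∑' k : ℕ, ((k.factorial : ℂ))⁻¹ * Matrix.trace (X ^ k * B) := by
  classical
  set L : Matrix (Fin n) (Fin n) ℂ →L[ℂ] ℂ :=
    (traceCLM n).comp ((ContinuousLinearMap.mul ℂ (Matrix (Fin n) (Fin n) ℂ)).flip B)
  have hL : ∀ Y, L Y = Matrix.trace (Y * B) := fun Y => rfl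
  rw [NormedSpace.exp_eq_tsum ℂ, ← hL]
  beta_reduce
  erw [ContinuousLinearMap.map_tsum _
    (NormedSpace.expSeries_summable' (𝕂 := ℂ) X)]
  congr 1
  funext k
  exact (congrArg Matrix.trace (smul_mul_assoc ((k.factorial : ℂ))⁻¹ (X ^ k) B)).trans
    (Matrix.trace_smul ((k.factorial : ℂ))⁻¹ (X ^ k * B))


noncomputable def g (A B : Matrix (Fin n) (Fin n) ℂ) (k : ℕ) (s : ℝ) : ℂ :=
  ((k.factorial : ℂ))⁻¹ * Matrix.trace ((A + s • B) ^ k)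

noncomputable def g' (A B : Matrix (Fin n) (Fin n) ℂ) (k : ℕ) (s : ℝ) : ℂ :=
  ((k.factorial : ℂ))⁻¹ * ((k : ℂ) * Matrix.trace ((A + s • B) ^ (k - 1) * B))

lemma hasDerivAt_g (A B : Matrix (Fin n) (Fin n) ℂ) (k : ℕ) (t : ℝ) :
    HasDerivAt (g A B k) (g' A B k t) t :=
  (hasDerivAt_trace_pow A B k t).const_mul _

noncomputable def u (A B : Matrix (Fin n) (Fin n) ℂ) : ℕ → ℝ
  | 0 => 0
  | (k+1) => ((n : ℝ) * ‖B‖) * ((‖A‖ + 2 * ‖B‖) ^ k / k.factorial)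

lemma summable_u (A B : Matrix (Fin n) (Fin n) ℂ) : Summable (u A B) := by
  refine (summable_nat_add_iff 1).mp ?_
  simpa [u] using
    (Real.summable_pow_div_factorial (‖A‖ + 2 * ‖B‖)).mul_left ((n : ℝ) * ‖B‖)

lemma g'_succ (A B : Matrix (Fin n) (Fin n) ℂ) (k : ℕ) (s : ℝ) :
    g' A B (k + 1) s = ((k.factorial : ℂ))⁻¹ * Matrix.trace ((A + s • B) ^ k * B) := by
  unfold g'
  rw [Nat.factorial_succ, Nat.add_sub_cancel]
  push_cast
  have hk : ((k : ℂ) + 1) ≠ 0 := by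
    have h1 : ((k : ℂ) + 1) = ((k + 1 : ℕ) : ℂ) := by push_cast; ring
    rw [h1]
    exact Nat.cast_ne_zero.mpr (Nat.succ_ne_zero k)
  have hf : ((k.factorial : ℂ)) ≠ 0 := Nat.cast_ne_zero.mpr k.factorial_ne_zero
  field_simp

lemma g'_bound (A B : Matrix (Fin n) (Fin n) ℂ) (k : ℕ) (y : ℝ)
    (hy : y ∈ Set.Ioo (-1 : ℝ) 2) : ‖g' A B k y‖ ≤ u A B k := by
  obtain ⟨hy1, hy2⟩ := hy
  cases k with
  | zero => simp [g', u]
  | succ k =>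
      rw [g'_succ]
      have hM : ‖A + y • B‖ ≤ ‖A‖ + 2 * ‖B‖ := by
        calc ‖A + y • B‖ ≤ ‖A‖ + ‖y • B‖ := norm_add_le _ _
          _ = ‖A‖ + |y| * ‖B‖ := by rw [norm_smul, Real.norm_eq_abs]
          _ ≤ ‖A‖ + 2 * ‖B‖ := by
              have : |y| ≤ 2 := abs_le.mpr ⟨by linarith, by linarith⟩
              nlinarith [norm_nonneg B]
      have hR0 : (0:ℝ) ≤ ‖A‖ + 2 * ‖B‖ := by positivity
      have htr : ‖Matrix.trace ((A + y • B) ^ k * B)‖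
          ≤ (n : ℝ) * ((‖A‖ + 2 * ‖B‖) ^ k * ‖B‖) := by
        calc ‖Matrix.trace ((A + y • B) ^ k * B)‖
            ≤ (n : ℝ) * ‖(A + y • B) ^ k * B‖ := norm_trace_le _
          _ ≤ (n : ℝ) * (‖A + y • B‖ ^ k * ‖B‖) := by
              exact mul_le_mul_of_nonneg_left (norm_pow_mul_le (A + y • B) B k)
                (Nat.cast_nonneg n)
          _ ≤ (n : ℝ) * ((‖A‖ + 2 * ‖B‖) ^ k * ‖B‖) := by
              have hpow : ‖A + y • B‖ ^ k ≤ (‖A‖ + 2 * ‖B‖) ^ k :=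
                pow_le_pow_left₀ (norm_nonneg _) hM k
              exact mul_le_mul_of_nonneg_left
                (mul_le_mul_of_nonneg_right hpow (norm_nonneg B)) (Nat.cast_nonneg n)
      rw [norm_mul]
      have hnf : ‖((k.factorial : ℂ))⁻¹‖ = ((k.factorial : ℝ))⁻¹ := by
        rw [norm_inv]
        norm_cast
      rw [hnf]
      have hfk : (0:ℝ) < (k.factorial : ℝ) := by exact_mod_cast k.factorial_pos
      calc ((k.factorial : ℝ))⁻¹ * ‖Matrix.trace ((A + y • B) ^ k * B)‖
          ≤ ((k.factorial : ℝ))⁻¹ * ((n : ℝ) * ((‖A‖ + 2 * ‖B‖) ^ k * ‖B‖)) := by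
            apply mul_le_mul_of_nonneg_left htr (by positivity)
        _ = u A B (k + 1) := by
            simp only [u]
            field_simp

lemma hasDerivAt_traceexp (A B : Matrix (Fin n) (Fin n) ℂ) (y : ℝ)
    (hy : y ∈ Set.Ioo (-1 : ℝ) 2) :
    HasDerivAt (fun z : ℝ => Matrix.trace (NormedSpace.exp (A + z • B)))
      (Matrix.trace (NormedSpace.exp (A + y • B) * B)) y := by
  have hg0 : Summable (fun k : ℕ => g A B k 0) := by
    have hs := (NormedSpace.expSeries_summable' (𝕂 := ℂ) (A + (0:ℝ) • B)).map
      (traceCLM n).toLinearMap.toAddMonoidHom (traceCLM n).continuous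
    exact hs.congr fun k => by simp [g, Function.comp, Matrix.trace_smul, smul_eq_mul]
  have hder := hasDerivAt_tsum_of_isPreconnected (summable_u A B) isOpen_Ioo
    (convex_Ioo (-1 : ℝ) 2).isPreconnected (fun k z _ => hasDerivAt_g A B k z)
    (fun k z hz => g'_bound A B k z hz)
    (show (0:ℝ) ∈ Set.Ioo (-1 : ℝ) 2 by norm_num) hg0 hy
  have hfun : (fun z : ℝ => ∑' k, g A B k z)
      = fun z : ℝ => Matrix.trace (NormedSpace.exp (A + z • B)) := by
    funext z
    rw [trace_exp_eq_tsum]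
    rfl
  have hsummable : Summable fun k => g' A B k y :=
    Summable.of_norm_bounded (summable_u A B) fun k => g'_bound A B k y hy
  have hdsum : ∑' k, g' A B k y
      = Matrix.trace (NormedSpace.exp (A + y • B) * B) := by
    rw [hsummable.tsum_eq_zero_add]
    have h0 : g' A B 0 y = 0 := by simp [g']
    rw [h0, zero_add, trace_exp_mul_eq_tsum]
    congr 1
    funext k
    rw [g'_succ]
  rw [hfun, hdsum] at hder
  exact hder

end TraceExpAux

theorem trace_exp_monotone_psd {n : ℕ} (A B : Matrix (Fin n) (Fin n) ℂ)
    (hA : A.IsHermitian) (hB : B.PosSemidef) :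
    (Matrix.trace (NormedSpace.exp A)).re ≤
      (Matrix.trace (NormedSpace.exp (A + B))).re := by
  classical
  set F : ℝ → ℝ := fun z => (Matrix.trace (NormedSpace.exp (A + z • B))).re with hF
  have hderiv : ∀ y ∈ Set.Ioo (-1 : ℝ) 2,
      HasDerivAt F ((Matrix.trace (NormedSpace.exp (A + y • B) * B)).re) y := by
    intro y hy
    exact Complex.reCLM.hasFDerivAt.comp_hasDerivAt y
      (TraceExpAux.hasDerivAt_traceexp A B y hy)
  have hIcc : Set.Icc (0:ℝ) 1 ⊆ Set.Ioo (-1 : ℝ) 2 := fun x hx =>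
    ⟨by linarith [hx.1], by linarith [hx.2]⟩
  have hmono : MonotoneOn F (Set.Icc 0 1) := by
    apply monotoneOn_of_deriv_nonneg (convex_Icc 0 1)
    · exact fun x hx => (hderiv x (hIcc hx)).continuousAt.continuousWithinAt
    · intro x hx
      rw [interior_Icc] at hx
      exact ((hderiv x (hIcc (Set.mem_Icc_of_Ioo hx))).differentiableAt).differentiableWithinAt
    · intro x hx
      rw [interior_Icc] at hx
      have h := hderiv x (hIcc (Set.mem_Icc_of_Ioo hx))
      rw [h.deriv]
      exact TraceExpAux.trace_mul_re_nonneg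
        (TraceExpAux.posSemidef_exp (hA.add (TraceExpAux.isHermitian_real_smul hB.1 x))) hB
  have h01 := hmono (Set.left_mem_Icc.mpr zero_le_one) (Set.right_mem_Icc.mpr zero_le_one)
    zero_le_one
  simpa [hF, zero_smul, one_smul] using h01
end

section
/- Bogolubov's inequality: for operators A, B, H on a finite-dimensional Hilbert space with H self-adjoint and β > 0, |Tr([A,B] e^{-βH})|² ≤ (β/2)·Tr((AA* + A*A) e^{-βH}) · Tr([[B,H],B*] e^{-βH}). -/
open Matrix

open Real in
lemma bogo_aux1 (s : ℝ) (hs : 0 ≤ s) : 2 * (exp s - 1) ≤ s * (exp s + 1) := by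
  set g : ℝ → ℝ := fun t => t * exp t + t - 2 * exp t + 2 with hg
  have hderiv : ∀ t : ℝ, HasDerivAt g ((t - 1) * exp t + 1) t := by
    intro t
    have h1 : HasDerivAt (fun t : ℝ => t * exp t) (1 * exp t + t * exp t) t :=
      (hasDerivAt_id t).mul (Real.hasDerivAt_exp t)
    have h2 : HasDerivAt (fun t : ℝ => 2 * exp t) (2 * exp t) t :=
      (Real.hasDerivAt_exp t).const_mul 2
    have := ((h1.add (hasDerivAt_id t)).sub h2).add_const 2
    exact this.congr_deriv (by ring)
  have hmono : Monotone g := by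
    apply monotone_of_deriv_nonneg
    · exact fun t => (hderiv t).differentiableAt
    · intro t
      rw [(hderiv t).deriv]
      have h1 : Real.exp (-t) * Real.exp t = 1 := by
        rw [← Real.exp_add]; simp
      nlinarith [mul_le_mul_of_nonneg_right (Real.add_one_le_exp (-t))
        (Real.exp_pos t).le]
  have := hmono hs
  simp only [hg] at this
  simp only [Real.exp_zero] at this
  nlinarith [this]

noncomputable def bogoW (β x y : ℝ) : ℝ :=
  if x = y then β * Real.exp (-β * x) else (Real.exp (-β * x) - Real.exp (-β * y)) / (y - x)

lemma bogoW_symm (β x y : ℝ) : bogoW β x y = bogoW β y x := by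
  unfold bogoW
  rcases eq_or_ne x y with h | h
  · simp [h]
  · rw [if_neg h, if_neg (Ne.symm h), div_eq_div_iff (sub_ne_zero.2 (Ne.symm h))
      (sub_ne_zero.2 h)]
    ring

lemma bogoW_mul (β x y : ℝ) :
    (y - x) * bogoW β x y = Real.exp (-β * x) - Real.exp (-β * y) := by
  unfold bogoW
  rcases eq_or_ne x y with h | h
  · simp [h]
  · rw [if_neg h, mul_div_cancel₀ _ (sub_ne_zero.2 (Ne.symm h))]

lemma bogoW_nonneg_aux {β : ℝ} (hβ : 0 < β) {x y : ℝ} (hxy : x ≤ y) :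
    0 ≤ bogoW β x y := by
  rcases eq_or_ne x y with h | h
  · unfold bogoW; rw [if_pos h]; positivity
  · unfold bogoW; rw [if_neg h]
    apply div_nonneg
    · rw [sub_nonneg, Real.exp_le_exp]
      nlinarith
    · linarith [lt_of_le_of_ne hxy h]

lemma bogoW_nonneg {β : ℝ} (hβ : 0 < β) (x y : ℝ) : 0 ≤ bogoW β x y := by
  rcases le_total x y with hxy | hxy
  · exact bogoW_nonneg_aux hβ hxy
  · rw [bogoW_symm]; exact bogoW_nonneg_aux hβ hxy

lemma bogoW_le_aux {β : ℝ} (hβ : 0 < β) {x y : ℝ} (hxy : x ≤ y) :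
    bogoW β x y ≤ β / 2 * (Real.exp (-β * x) + Real.exp (-β * y)) := by
  rcases eq_or_ne x y with h | h
  · subst h
    unfold bogoW
    rw [if_pos rfl]
    ring_nf
    nlinarith [Real.exp_pos (-β * x)]
  · have hlt : x < y := lt_of_le_of_ne hxy h
    unfold bogoW
    rw [if_neg h, div_le_iff₀ (by linarith)]
    have hE : Real.exp (-β * x) = Real.exp (-β * y) * Real.exp (β * (y - x)) := by
      rw [← Real.exp_add]; ring_nf
    have hs : 0 ≤ β * (y - x) := by nlinarith
    have key := bogo_aux1 (β * (y - x)) hs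
    have hb := Real.exp_pos (-β * y)
    rw [hE]
    nlinarith [mul_le_mul_of_nonneg_left key hb.le]

lemma bogoW_le {β : ℝ} (hβ : 0 < β) (x y : ℝ) :
    bogoW β x y ≤ β / 2 * (Real.exp (-β * x) + Real.exp (-β * y)) := by
  rcases le_total x y with hxy | hxy
  · exact bogoW_le_aux hβ hxy
  · rw [bogoW_symm, add_comm]
    exact bogoW_le_aux hβ hxy

lemma bogo_cs {ι : Type*} [Fintype ι] (u v : ι → ℂ) (w : ι → ℝ) (hw : ∀ i, 0 ≤ w i) :
    ‖∑ i, (w i : ℂ) * u i * v i‖ ^ 2 ≤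
      (∑ i, w i * ‖u i‖ ^ 2) * (∑ i, w i * ‖v i‖ ^ 2) := by
  have h1 : ‖∑ i, (w i : ℂ) * u i * v i‖ ≤
      ∑ i, (Real.sqrt (w i) * ‖u i‖) * (Real.sqrt (w i) * ‖v i‖) := by
    refine (norm_sum_le _ _).trans (le_of_eq (Finset.sum_congr rfl fun i _ => ?_))
    rw [norm_mul, norm_mul, Complex.norm_real, Real.norm_of_nonneg (hw i)]
    rw [show ∀ a b c : ℝ, Real.sqrt a * b * (Real.sqrt a * c) =
      Real.sqrt a * Real.sqrt a * b * c from fun a b c => by ring,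
      Real.mul_self_sqrt (hw i)]
  have h2 := Finset.sum_mul_sq_le_sq_mul_sq Finset.univ
    (fun i => Real.sqrt (w i) * ‖u i‖) (fun i => Real.sqrt (w i) * ‖v i‖)
  have h3 : ‖∑ i, (w i : ℂ) * u i * v i‖ ^ 2 ≤
      (∑ i, (Real.sqrt (w i) * ‖u i‖) * (Real.sqrt (w i) * ‖v i‖)) ^ 2 :=
    pow_le_pow_left₀ (norm_nonneg _) h1 2
  refine h3.trans (h2.trans (le_of_eq ?_))
  congr 1 <;> refine Finset.sum_congr rfl fun i _ => ?_ <;>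
    rw [mul_pow, Real.sq_sqrt (hw i)]

lemma bogo_mul_star (z : ℂ) : z * star z = ((‖z‖ : ℂ)) ^ 2 := by
  rw [Complex.star_def, Complex.mul_conj, Complex.normSq_eq_norm_sq]
  push_cast
  ring

lemma trace_comm_diag {n : ℕ} (A B : Matrix (Fin n) (Fin n) ℂ) (fC : Fin n → ℂ) :
    ((A * B - B * A) * diagonal fC).trace =
      ∑ i, ∑ j, A i j * B j i * (fC i - fC j) := by
  have swap : ∑ i, ∑ j, B i j * A j i * fC i = ∑ i, ∑ j, A i j * B j i * fC j := by
    rw [Finset.sum_comm]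
    exact Finset.sum_congr rfl fun i _ => Finset.sum_congr rfl fun j _ => by ring
  simp only [Matrix.trace, Matrix.diag, Matrix.mul_diagonal]
  simp only [Matrix.sub_apply, Matrix.mul_apply, sub_mul, mul_sub,
    Finset.sum_sub_distrib, Finset.sum_mul]
  rw [swap]

lemma trace_AA_diag {n : ℕ} (A : Matrix (Fin n) (Fin n) ℂ) (f : Fin n → ℝ) :
    ((A * Aᴴ + Aᴴ * A) * diagonal (fun i => (f i : ℂ))).trace =
      ((∑ i, ∑ j, ‖A i j‖ ^ 2 * (f i + f j) : ℝ) : ℂ) := by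
  have swap : ∑ i, ∑ j, star (A j i) * A j i * ((f i : ℝ) : ℂ) =
      ∑ i, ∑ j, star (A i j) * A i j * ((f j : ℝ) : ℂ) := by
    rw [Finset.sum_comm]
  simp only [Matrix.trace, Matrix.diag, Matrix.mul_diagonal]
  simp only [Matrix.add_apply, Matrix.mul_apply, Matrix.conjTranspose_apply, add_mul,
    Finset.sum_add_distrib, Finset.sum_mul]
  rw [swap]
  push_cast
  rw [← Finset.sum_add_distrib]
  refine Finset.sum_congr rfl fun i _ => ?_
  rw [← Finset.sum_add_distrib]
  refine Finset.sum_congr rfl fun j _ => ?_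
  rw [mul_comm (star (A i j)) (A i j), bogo_mul_star]
  ring

lemma bogo_diag {n : ℕ} {β : ℝ} (hβ : 0 < β) (A B : Matrix (Fin n) (Fin n) ℂ)
    (d : Fin n → ℝ) :
    ‖((A * B - B * A) * diagonal (fun i => (Real.exp (-β * d i) : ℂ))).trace‖ ^ 2 ≤
      (β / 2) *
        (((A * Aᴴ + Aᴴ * A) * diagonal (fun i => (Real.exp (-β * d i) : ℂ))).trace).re *
        ((((B * diagonal (fun i => (d i : ℂ)) - diagonal (fun i => (d i : ℂ)) * B) * Bᴴ -
            Bᴴ * (B * diagonal (fun i => (d i : ℂ)) - diagonal (fun i => (d i : ℂ)) * B)) *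
            diagonal (fun i => (Real.exp (-β * d i) : ℂ))).trace).re := by
  set f : Fin n → ℝ := fun i => Real.exp (-β * d i) with hf
  set D : Matrix (Fin n) (Fin n) ℂ := diagonal (fun i => (d i : ℂ)) with hD
  set C : Matrix (Fin n) (Fin n) ℂ := B * D - D * B with hC
  have hCapp : ∀ i j, C i j = B i j * (((d j : ℝ) : ℂ) - (d i : ℝ)) := by
    intro i j
    simp only [hC, hD, Matrix.sub_apply, Matrix.mul_diagonal, Matrix.diagonal_mul]
    ring
  rw [trace_comm_diag A B, trace_AA_diag A]
  have h3 : ((C * Bᴴ - Bᴴ * C) * diagonal (fun i => (f i : ℂ))).trace =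
      ((∑ i, ∑ j, ‖B i j‖ ^ 2 * ((d j - d i) * (f i - f j)) : ℝ) : ℂ) := by
    rw [trace_comm_diag C Bᴴ]
    push_cast
    refine Finset.sum_congr rfl fun i _ => Finset.sum_congr rfl fun j _ => ?_
    rw [hCapp i j, Matrix.conjTranspose_apply]
    calc B i j * (((d j : ℝ) : ℂ) - (d i : ℝ)) * star (B i j) *
          (((f i : ℝ) : ℂ) - (f j : ℝ))
        = B i j * star (B i j) * ((((d j : ℝ) : ℂ) - (d i : ℝ)) *
          (((f i : ℝ) : ℂ) - (f j : ℝ))) := by ring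
      _ = _ := by rw [bogo_mul_star]
  rw [h3, Complex.ofReal_re, Complex.ofReal_re]
  set u : Fin n × Fin n → ℂ := fun p => A p.1 p.2 with hu
  set v : Fin n × Fin n → ℂ := fun p => B p.2 p.1 * (((d p.2 : ℝ) : ℂ) - (d p.1 : ℝ)) with hv
  set w : Fin n × Fin n → ℝ := fun p => bogoW β (d p.1) (d p.2) with hw
  have hwpos : ∀ p, 0 ≤ w p := fun p => bogoW_nonneg hβ _ _
  have hLHS : ∑ i, ∑ j, A i j * B j i * (((f i : ℝ) : ℂ) - (f j : ℝ)) =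
      ∑ p : Fin n × Fin n, (w p : ℂ) * u p * v p := by
    rw [Fintype.sum_prod_type]
    refine Finset.sum_congr rfl fun i _ => Finset.sum_congr rfl fun j _ => ?_
    have key : ((w (i, j) * (d j - d i) : ℝ) : ℂ) = ((f i - f j : ℝ) : ℂ) := by
      norm_cast
      rw [mul_comm]
      exact bogoW_mul β (d i) (d j)
    push_cast at key
    simp only [hu, hv]
    linear_combination (-(A i j * B j i)) * key
  have hCS := bogo_cs u v w hwpos
  have hU : ∑ p : Fin n × Fin n, w p * ‖u p‖ ^ 2 ≤
      (β / 2) * ∑ i, ∑ j, ‖A i j‖ ^ 2 * (f i + f j) := by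
    rw [Fintype.sum_prod_type, Finset.mul_sum]
    refine Finset.sum_le_sum fun i _ => ?_
    rw [Finset.mul_sum]
    refine Finset.sum_le_sum fun j _ => ?_
    calc w (i, j) * ‖u (i, j)‖ ^ 2 ≤ (β / 2 * (f i + f j)) * ‖u (i, j)‖ ^ 2 :=
          mul_le_mul_of_nonneg_right (bogoW_le hβ _ _) (by positivity)
      _ = β / 2 * (‖A i j‖ ^ 2 * (f i + f j)) := by simp only [hu]; ring
  have hV : ∑ p : Fin n × Fin n, w p * ‖v p‖ ^ 2 =
      ∑ i, ∑ j, ‖B i j‖ ^ 2 * ((d j - d i) * (f i - f j)) := by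
    rw [Fintype.sum_prod_type, Finset.sum_comm]
    refine Finset.sum_congr rfl fun i _ => Finset.sum_congr rfl fun j _ => ?_
    simp only [hv, hw, norm_mul]
    rw [bogoW_symm β (d j) (d i)]
    have hnorm : ‖((d i : ℝ) : ℂ) - ((d j : ℝ) : ℂ)‖ = |d i - d j| := by
      rw [← Complex.ofReal_sub, Complex.norm_real, Real.norm_eq_abs]
    rw [hnorm, mul_pow, sq_abs]
    have key := bogoW_mul β (d i) (d j)
    linear_combination (‖B i j‖ ^ 2 * (d j - d i)) * key
  have hVnonneg : 0 ≤ ∑ p : Fin n × Fin n, w p * ‖v p‖ ^ 2 :=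
    Finset.sum_nonneg fun p _ => mul_nonneg (hwpos p) (by positivity)
  rw [hLHS]
  calc ‖∑ p : Fin n × Fin n, (w p : ℂ) * u p * v p‖ ^ 2
      ≤ (∑ p : Fin n × Fin n, w p * ‖u p‖ ^ 2) * (∑ p : Fin n × Fin n, w p * ‖v p‖ ^ 2) := hCS
    _ ≤ ((β / 2) * ∑ i, ∑ j, ‖A i j‖ ^ 2 * (f i + f j)) *
        (∑ p : Fin n × Fin n, w p * ‖v p‖ ^ 2) :=
        mul_le_mul_of_nonneg_right hU hVnonneg
    _ = _ := by rw [hV]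

attribute [local instance] Matrix.linftyOpNormedRing Matrix.linftyOpNormedAlgebra

theorem bogolubov_inequality {n : ℕ}
    (A B H : Matrix (Fin n) (Fin n) ℂ) (hH : H.IsHermitian) (β : ℝ) (hβ : 0 < β) :
    ‖((A * B - B * A) * NormedSpace.exp ((-β) • H)).trace‖ ^ 2 ≤
      (β / 2) * (((A * Aᴴ + Aᴴ * A) * NormedSpace.exp ((-β) • H)).trace).re *
        ((((B * H - H * B) * Bᴴ - Bᴴ * (B * H - H * B)) *
            NormedSpace.exp ((-β) • H)).trace).re := by
  set d : Fin n → ℝ := hH.eigenvalues with hd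
  set V : Matrix (Fin n) (Fin n) ℂ := (hH.eigenvectorUnitary : Matrix (Fin n) (Fin n) ℂ)
    with hV
  have hU1 : star V * V = 1 := (Matrix.mem_unitaryGroup_iff'.mp hH.eigenvectorUnitary.2)
  have hU2 : V * star V = 1 := (Matrix.mem_unitaryGroup_iff.mp hH.eigenvectorUnitary.2)
  have hspec : H = V * diagonal (fun i => (d i : ℂ)) * star V := by
    convert hH.spectral_theorem using 2
    rw [Unitary.conjStarAlgAut_apply]
    rfl
  set fexp : Fin n → ℂ := fun i => (Real.exp (-β * d i) : ℂ) with hfexp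
  -- exponential computation
  have hsmul : (-β : ℝ) • H = V * diagonal (fun i => ((-β * d i : ℝ) : ℂ)) * star V := by
    conv_lhs => rw [hspec]
    rw [← smul_mul_assoc, ← mul_smul_comm, ← Matrix.diagonal_smul,
      show ((-β : ℝ) • fun i => ((d i : ℝ) : ℂ)) = fun i => ((-β * d i : ℝ) : ℂ) by
        funext i
        rw [Pi.smul_apply, Complex.real_smul]
        push_cast
        ring]
  have hexp : NormedSpace.exp ((-β) • H) = V * diagonal fexp * star V := by
    rw [hsmul]
    set u : (Matrix (Fin n) (Fin n) ℂ)ˣ := ⟨V, star V, hU2, hU1⟩ with hu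
    have huv : V = (u : Matrix (Fin n) (Fin n) ℂ) := rfl
    have huinv : star V = ((u⁻¹ : (Matrix (Fin n) (Fin n) ℂ)ˣ) : Matrix (Fin n) (Fin n) ℂ) :=
      rfl
    have hde : NormedSpace.exp (diagonal fun i => ((-β * d i : ℝ) : ℂ)) = diagonal fexp := by
      rw [Matrix.exp_diagonal, Pi.exp_def, ← Complex.exp_eq_exp_ℂ]
      simp only [← Complex.ofReal_exp, hfexp]
    rw [huv, huinv, Matrix.exp_units_conj, ← huv, ← huinv, hde]
  -- trace transfer
  have htr : ∀ X : Matrix (Fin n) (Fin n) ℂ,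
      (X * NormedSpace.exp ((-β) • H)).trace =
        ((star V * X * V) * diagonal fexp).trace := by
    intro X
    rw [hexp,
      show X * (V * diagonal fexp * star V) = X * V * diagonal fexp * star V by
        simp only [mul_assoc],
      Matrix.trace_mul_comm,
      show star V * (X * V * diagonal fexp) = star V * X * V * diagonal fexp by
        simp only [mul_assoc]]
  have hmul : ∀ X Y : Matrix (Fin n) (Fin n) ℂ,
      star V * (X * Y) * V = (star V * X * V) * (star V * Y * V) := by
    intro X Y
    rw [show star V * (X * Y) * V = star V * X * (1 : Matrix (Fin n) (Fin n) ℂ) * Y * V by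
      simp only [mul_one, mul_assoc], ← hU2]
    simp only [mul_assoc]
  have hadj : ∀ X : Matrix (Fin n) (Fin n) ℂ,
      star V * Xᴴ * V = (star V * X * V)ᴴ := by
    intro X
    simp only [Matrix.star_eq_conjTranspose, Matrix.conjTranspose_mul,
      Matrix.conjTranspose_conjTranspose, mul_assoc]
  have hHdiag : star V * H * V = diagonal (fun i => (d i : ℂ)) := by
    conv_lhs => rw [hspec]
    simp only [mul_assoc]
    rw [hU1, mul_one, ← mul_assoc, hU1, one_mul]
  set A' := star V * A * V with hA'
  set B' := star V * B * V with hB'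
  have E1 : star V * (A * B - B * A) * V = A' * B' - B' * A' := by
    rw [Matrix.mul_sub, Matrix.sub_mul, hmul, hmul]
  have E2 : star V * (A * Aᴴ + Aᴴ * A) * V = A' * A'ᴴ + A'ᴴ * A' := by
    rw [Matrix.mul_add, Matrix.add_mul, hmul, hmul, hadj]
  have EBH : star V * (B * H - H * B) * V =
      B' * diagonal (fun i => (d i : ℂ)) - diagonal (fun i => (d i : ℂ)) * B' := by
    rw [Matrix.mul_sub, Matrix.sub_mul, hmul, hmul, hHdiag]
  have E3 : star V * ((B * H - H * B) * Bᴴ - Bᴴ * (B * H - H * B)) * V =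
      (B' * diagonal (fun i => (d i : ℂ)) - diagonal (fun i => (d i : ℂ)) * B') * B'ᴴ -
        B'ᴴ * (B' * diagonal (fun i => (d i : ℂ)) - diagonal (fun i => (d i : ℂ)) * B') := by
    rw [Matrix.mul_sub, Matrix.sub_mul, hmul, hmul, hadj, EBH]
  rw [htr, htr, htr, E1, E2, E3]
  exact bogo_diag hβ A' B' d
end
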